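/- Let M₁, R > 0 and let Ψ : ℝ → ℝ be φ₁-Lipschitz and φ₂-smooth with support D_Ψ = (a₁, a₂) ⊆ (−M₁R, M₁R), 0 ∈ D_Ψ, Ψ(0) = 0. For an integer τ ≥ 2 and precision η > 0, set b_j := (−1 + 2j/τ)·M₁R, w^{(j)} := (2M₁R/τ)·Ψ'(b_j) if b_j ∈ D_Ψ and 0 otherwise, w^{(c)} := Ψ(a₁), and let [·]_η denote rounding to a nearest element of η·ℤ (so |t − [t]_η| ≤ η/2). Define the discretized two-layer network ψ_w^{(τ,η)}(x) := Σ_{j=1}^τ [w^{(j)}]_η·H(x − b_j) + [w^{(c)}]_η, with H the Heaviside step function. Then for all x ∈ D_Ψ, |ψ_w^{(τ,η)}(x) − Ψ(x)| ≤ (τ + 1)·η/2 + 2·M₁²·R²·φ₂/τ. -/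

import Mathlib

set_option maxHeartbeats 1000000


/-- The Heaviside (unit) step function: `H(t) = 1` for `t ≥ 0` and `H(t) = 0` for `t < 0`. -/
noncomputable def heaviside (t : ℝ) : ℝ := if 0 ≤ t then 1 else 0

open MeasureTheory in
private lemma taylor_aux (f f' : ℝ → ℝ) (φ : ℝ) (hφ : 0 ≤ φ)
    (hd : ∀ t : ℝ, HasDerivAt f (f' t) t)
    (hlip : ∀ s t : ℝ, |f' s - f' t| ≤ φ * |s - t|)
    {u v : ℝ} (huv : u ≤ v) :
    |f v - f u - (v - u) * f' v| ≤ φ * (v - u) ^ 2 / 2 ∧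
      |f v - f u - (v - u) * f' u| ≤ φ * (v - u) ^ 2 / 2 := by
  have hc : Continuous f' := by
    have : LipschitzWith (Real.toNNReal φ) f' := by
      apply LipschitzWith.of_dist_le_mul
      intro s t
      rw [Real.dist_eq, Real.dist_eq]
      refine (hlip s t).trans (mul_le_mul_of_nonneg_right ?_ (abs_nonneg _))
      rw [Real.coe_toNNReal']
      exact le_max_left _ _
    exact this.continuous
  have hint : IntervalIntegrable f' volume u v := hc.intervalIntegrable u v
  have ftc : ∫ t in u..v, f' t = f v - f u :=
    intervalIntegral.integral_eq_sub_of_hasDerivAt (fun t _ => hd t) hint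
  constructor
  · have heq : f v - f u - (v - u) * f' v = ∫ t in u..v, (f' t - f' v) := by
      rw [intervalIntegral.integral_sub hint intervalIntegrable_const, ftc,
        intervalIntegral.integral_const, smul_eq_mul]
    have hgint : IntervalIntegrable (fun t => φ * (v - t)) volume u v :=
      (Continuous.intervalIntegrable (by fun_prop) u v)
    have hle : ‖∫ t in u..v, (f' t - f' v)‖ ≤ |∫ t in u..v, φ * (v - t)| := by
      refine intervalIntegral.norm_integral_le_abs_of_norm_le ?_ hgint
      filter_upwards [ae_restrict_mem measurableSet_uIoc] with t ht
      rw [Set.uIoc_of_le huv] at ht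
      rw [Real.norm_eq_abs]
      refine (hlip t v).trans ?_
      rw [abs_sub_comm, abs_of_nonneg (sub_nonneg.2 ht.2)]
    have hval : ∫ t in u..v, φ * (v - t) = φ * (v - u) ^ 2 / 2 := by
      have hii : IntervalIntegrable (fun t : ℝ => t) volume u v :=
        Continuous.intervalIntegrable (by fun_prop) u v
      rw [intervalIntegral.integral_const_mul, intervalIntegral.integral_sub
        intervalIntegrable_const hii,
        intervalIntegral.integral_const, integral_id, smul_eq_mul]
      ring
    rw [heq, ← Real.norm_eq_abs]
    refine hle.trans ?_
    rw [hval, abs_of_nonneg (by positivity)]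
  · have heq : f v - f u - (v - u) * f' u = ∫ t in u..v, (f' t - f' u) := by
      rw [intervalIntegral.integral_sub hint intervalIntegrable_const, ftc,
        intervalIntegral.integral_const, smul_eq_mul]
    have hgint : IntervalIntegrable (fun t => φ * (t - u)) volume u v :=
      (Continuous.intervalIntegrable (by fun_prop) u v)
    have hle : ‖∫ t in u..v, (f' t - f' u)‖ ≤ |∫ t in u..v, φ * (t - u)| := by
      refine intervalIntegral.norm_integral_le_abs_of_norm_le ?_ hgint
      filter_upwards [ae_restrict_mem measurableSet_uIoc] with t ht
      rw [Set.uIoc_of_le huv] at ht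
      rw [Real.norm_eq_abs]
      refine (hlip t u).trans ?_
      rw [abs_of_nonneg (by linarith [ht.1] : (0:ℝ) ≤ t - u)]
    have hval : ∫ t in u..v, φ * (t - u) = φ * (v - u) ^ 2 / 2 := by
      have hii : IntervalIntegrable (fun t : ℝ => t) volume u v :=
        Continuous.intervalIntegrable (by fun_prop) u v
      rw [intervalIntegral.integral_const_mul, intervalIntegral.integral_sub
        hii intervalIntegrable_const,
        intervalIntegral.integral_const, integral_id, smul_eq_mul]
      ring
    rw [heq, ← Real.norm_eq_abs]
    refine hle.trans ?_
    rw [hval, abs_of_nonneg (by positivity)]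

private lemma zero_of_abs_le_mul (c φ : ℝ) (hφ : 0 ≤ φ)
    (key : ∀ ε > (0:ℝ), |c| ≤ φ * ε) : c = 0 := by
  by_contra hne
  have hpos : 0 < |c| := abs_pos.2 hne
  have := key (|c| / (φ + 1)) (by positivity)
  have hφ1 : (0:ℝ) < φ + 1 := by linarith
  have h1 : φ * (|c| / (φ + 1)) < |c| := by
    rw [mul_comm, div_mul_eq_mul_div, div_lt_iff₀ hφ1]
    nlinarith
  linarith

/-- **approximation error of the discretized two-layer network.** Let `Ψ` be
`φ₁`-Lipschitz and `φ₂`-smooth, vanishing outside its support `(a₁, a₂) ⊆ (-M₁R, M₁R)` with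
`0 ∈ (a₁, a₂)` and `Ψ(0) = 0`. With breakpoints `b_j = (-1 + 2j/τ)·M₁R`, weights
`w^{(j)} = (2M₁R/τ)·Ψ'(b_j)` for `b_j ∈ (a₁, a₂)` (else `0`), constant weight `w^{(c)} = Ψ(a₁)`,
and each weight rounded by `rnd` to a nearest element of `η·ℤ` (so `|t - rnd t| ≤ η/2`), the
discretized network `ψ_w^{(τ,η)}(x) = Σ_j [w^{(j)}]_η·H(x - b_j) + [w^{(c)}]_η` satisfies, for
all `x ∈ (a₁, a₂)`, `|ψ_w^{(τ,η)}(x) - Ψ(x)| ≤ (τ+1)η/2 + 2M₁²R²φ₂/τ`. -/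
theorem discretized_network_approximation_error
    (M₁ R φ₁ φ₂ a₁ a₂ : ℝ) (hM₁ : 0 < M₁) (hR : 0 < R)
    (Ψ Ψ' : ℝ → ℝ)
    (hΨ_lip : ∀ x y : ℝ, |Ψ x - Ψ y| ≤ φ₁ * |x - y|)
    (hΨ' : ∀ x : ℝ, HasDerivAt Ψ (Ψ' x) x)
    (hΨ'_lip : ∀ x y : ℝ, |Ψ' x - Ψ' y| ≤ φ₂ * |x - y|)
    (hsub : Set.Ioo a₁ a₂ ⊆ Set.Ioo (-(M₁ * R)) (M₁ * R))
    (hsupp : ∀ x : ℝ, x ∉ Set.Ioo a₁ a₂ → Ψ x = 0)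
    (h0 : 0 ∈ Set.Ioo a₁ a₂) (hΨ0 : Ψ 0 = 0)
    (τ : ℕ) (hτ : 2 ≤ τ)
    (b : ℕ → ℝ) (hb : ∀ j, b j = (-1 + 2 * (j : ℝ) / (τ : ℝ)) * (M₁ * R))
    (w : ℕ → ℝ)
    (hw : ∀ j, w j = if a₁ < b j ∧ b j < a₂ then (2 * M₁ * R / (τ : ℝ)) * Ψ' (b j) else 0)
    (wc : ℝ) (hwc : wc = Ψ a₁)
    (η : ℝ) (hη : 0 < η)
    (rnd : ℝ → ℝ) (hrnd_mem : ∀ t : ℝ, ∃ m : ℤ, rnd t = η * m)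
    (hrnd_close : ∀ t : ℝ, |t - rnd t| ≤ η / 2) :
    ∀ x ∈ Set.Ioo a₁ a₂,
      |(∑ j ∈ Finset.Icc 1 τ, rnd (w j) * heaviside (x - b j) + rnd wc) - Ψ x|
        ≤ (τ + 1) * η / 2 + 2 * M₁ ^ 2 * R ^ 2 * φ₂ / (τ : ℝ) := by
  classical
  intro x hx
  have hτR : (0:ℝ) < (τ:ℝ) := by
    have : 0 < τ := by omega
    exact_mod_cast this
  have hMR : 0 < M₁ * R := mul_pos hM₁ hR
  set h : ℝ := 2 * M₁ * R / (τ:ℝ) with hh_def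
  have hh : 0 < h := by positivity
  have hstep : ∀ j : ℕ, b (j+1) = b j + h := by
    intro j
    rw [hb, hb, hh_def]
    push_cast
    field_simp
    ring
  have hb0 : b 0 = -(M₁*R) := by rw [hb]; norm_num
  have hbτ : b τ = M₁*R := by
    rw [hb]
    field_simp
    norm_num
  have hmono : Monotone b := by
    intro i j hij
    rw [hb, hb]
    have hij' : (i:ℝ) ≤ (j:ℝ) := by exact_mod_cast hij
    have h2 : 2 * (i:ℝ) / (τ:ℝ) ≤ 2 * (j:ℝ) / (τ:ℝ) := by gcongr
    nlinarith
  have hφ₂ : 0 ≤ φ₂ := by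
    have h1 := hΨ'_lip 0 1
    have h2 : |(0:ℝ) - 1| = 1 := by norm_num
    rw [h2, mul_one] at h1
    linarith [abs_nonneg (Ψ' 0 - Ψ' 1)]
  have hφ₁ : 0 ≤ φ₁ := by
    have h1 := hΨ_lip 0 1
    have h2 : |(0:ℝ) - 1| = 1 := by norm_num
    rw [h2, mul_one] at h1
    linarith [abs_nonneg (Ψ 0 - Ψ 1)]
  -- Ψ' vanishes outside the open support
  have hstrict : ∀ y : ℝ, y < a₁ ∨ a₂ < y → Ψ' y = 0 := by
    intro y hy
    have hev : Ψ =ᶠ[nhds y] (fun _ => (0:ℝ)) := by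
      rcases hy with hy | hy
      · filter_upwards [Iio_mem_nhds hy] with t ht
        exact hsupp t (fun hmem => absurd hmem.1 (not_lt.2 ht.le))
      · filter_upwards [Ioi_mem_nhds hy] with t ht
        exact hsupp t (fun hmem => absurd hmem.2 (not_lt.2 ht.le))
    have hzero : HasDerivAt (fun _ : ℝ => (0:ℝ)) (Ψ' y) y :=
      HasDerivAt.congr_of_eventuallyEq (hΨ' y) hev.symm
    exact hzero.unique (hasDerivAt_const y 0)
  have hΨ'0 : ∀ y : ℝ, y ∉ Set.Ioo a₁ a₂ → Ψ' y = 0 := by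
    intro y hy
    rw [Set.mem_Ioo, not_and_or, not_lt, not_lt] at hy
    rcases hy with hy | hy
    · rcases eq_or_lt_of_le hy with hy' | hy'
      · -- y = a₁
        subst hy'
        apply zero_of_abs_le_mul _ φ₂ hφ₂
        intro ε hε
        have h1 : Ψ' (y - ε) = 0 := hstrict _ (Or.inl (by linarith))
        calc |Ψ' y| = |Ψ' y - Ψ' (y - ε)| := by rw [h1, sub_zero]
          _ ≤ φ₂ * |y - (y - ε)| := hΨ'_lip _ _
          _ = φ₂ * ε := by rw [show y - (y - ε) = ε by ring, abs_of_pos hε]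
      · exact hstrict y (Or.inl hy')
    · rcases eq_or_lt_of_le hy with hy' | hy'
      · -- y = a₂
        apply zero_of_abs_le_mul _ φ₂ hφ₂
        intro ε hε
        have h1 : Ψ' (y + ε) = 0 := hstrict _ (Or.inr (by linarith))
        calc |Ψ' y| = |Ψ' y - Ψ' (y + ε)| := by rw [h1, sub_zero]
          _ ≤ φ₂ * |y - (y + ε)| := hΨ'_lip _ _
          _ = φ₂ * ε := by rw [show y - (y + ε) = -ε by ring, abs_neg, abs_of_pos hε]
      · exact hstrict y (Or.inr hy')
  -- support boundary facts
  have hΨa₁ : Ψ a₁ = 0 := hsupp a₁ (fun hmem => lt_irrefl _ hmem.1)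
  have hwc0 : wc = 0 := by rw [hwc, hΨa₁]
  have hxmem := hsub hx
  have hx1 : -(M₁*R) < x := hxmem.1
  have hx2 : x < M₁*R := hxmem.2
  have h0mem := hsub h0
  have ha₁ : -(M₁*R) ≤ a₁ := by
    by_contra hcon
    push_neg at hcon
    have : -(M₁*R) ∈ Set.Ioo a₁ a₂ := ⟨hcon, lt_trans h0mem.1 h0.2⟩
    exact lt_irrefl _ (hsub this).1
  have hb0notin : b 0 ∉ Set.Ioo a₁ a₂ := by
    rw [hb0]
    intro hmem
    exact absurd hmem.1 (not_lt.2 ha₁)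
  have hΨb0 : Ψ (b 0) = 0 := hsupp _ hb0notin
  have hΨ'b0 : Ψ' (b 0) = 0 := hΨ'0 _ hb0notin
  -- rewrite the weights
  have hw' : ∀ j, w j = h * Ψ' (b j) := by
    intro j
    rw [hw]
    split_ifs with hj
    · rfl
    · rw [hΨ'0 (b j) (by simpa [Set.mem_Ioo] using hj), mul_zero]
  -- the index of the last breakpoint below x
  set P : ℕ → Prop := fun j => b j ≤ x with hP
  set k : ℕ := Nat.findGreatest P (τ-1) with hk
  have hk_le : k ≤ τ - 1 := Nat.findGreatest_le _
  have hk_lt : k < τ := by omega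
  have hbk : b k ≤ x := by
    have hP0 : P 0 := by rw [hP]; simp only; rw [hb0]; linarith
    exact Nat.findGreatest_spec (Nat.zero_le _) hP0
  have hgt : ∀ j, k < j → j ≤ τ → x < b j := by
    intro j hj hjτ
    rcases eq_or_lt_of_le hjτ with h' | h'
    · rw [h', hbτ]; exact hx2
    · have hnp : ¬ P j := Nat.findGreatest_is_greatest hj (by omega)
      rw [hP] at hnp
      exact lt_of_not_ge hnp
  set δ : ℝ := x - b k with hδ_def
  have hδ0 : 0 ≤ δ := by rw [hδ_def]; linarith
  have hδh : δ ≤ h := by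
    have h1 := hgt (k+1) (Nat.lt_succ_self k) (by omega)
    rw [hstep k] at h1
    rw [hδ_def]
    linarith
  clear_value h δ
  -- heaviside values
  have hH1 : ∀ j, j ≤ k → heaviside (x - b j) = 1 := by
    intro j hj
    have : b j ≤ x := le_trans (hmono hj) hbk
    unfold heaviside
    rw [if_pos (by linarith)]
  have hH0 : ∀ j, k < j → j ≤ τ → heaviside (x - b j) = 0 := by
    intro j hj hjτ
    have := hgt j hj hjτ
    unfold heaviside
    rw [if_neg (by linarith)]
  -- network sum simplification
  have hsum : ∑ j ∈ Finset.Icc 1 τ, rnd (w j) * heaviside (x - b j)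
      = ∑ i ∈ Finset.range k, rnd (w (1+i)) := by
    rw [← Finset.Ico_add_one_right_eq_Icc, Finset.sum_Ico_eq_sum_range]
    try simp only [Nat.add_sub_cancel, Nat.succ_sub_one]
    rw [Finset.range_eq_Ico, ← Finset.sum_Ico_consecutive _ (Nat.zero_le k) hk_lt.le]
    have e2 : ∑ i ∈ Finset.Ico k τ, rnd (w (1+i)) * heaviside (x - b (1+i)) = 0 := by
      apply Finset.sum_eq_zero
      intro i hi
      rw [Finset.mem_Ico] at hi
      rw [hH0 (1+i) (by omega) (by omega), mul_zero]
    rw [e2, add_zero]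
    rw [Finset.range_eq_Ico]
    apply Finset.sum_congr rfl
    intro i hi
    rw [Finset.mem_Ico] at hi
    rw [hH1 (1+i) (by omega), mul_one]
  -- the approximation estimate for the un-rounded network
  set G : ℕ → ℝ := fun j => Ψ (b j) + δ * Ψ' (b j) with hG
  have hG0 : G 0 = 0 := by simp only [hG]; rw [hΨb0, hΨ'b0]; ring
  have tele : ∑ i ∈ Finset.range k, (G (i+1) - G i) = G k - G 0 :=
    Finset.sum_range_sub G k
  have iden : (∑ i ∈ Finset.range k, w (1+i)) - Ψ x
      = (∑ i ∈ Finset.range k, (w (1+i) - (G (i+1) - G i)))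
        - (Ψ x - Ψ (b k) - δ * Ψ' (b k)) := by
    rw [Finset.sum_sub_distrib, tele, hG0]
    simp only [hG]
    ring
  have hterm : ∀ i ∈ Finset.range k, |w (1+i) - (G (i+1) - G i)| ≤ φ₂ * h^2 / 2 := by
    intro i _
    have huv : b (i+1) = b i + h := hstep i
    set u := b i with hu
    set v := b (i+1) with hv
    set c := u + δ with hc
    have huc : u ≤ c := by rw [hc]; linarith
    have hcv : c ≤ v := by rw [hc, huv]; linarith
    obtain ⟨hT1, -⟩ := taylor_aux Ψ Ψ' φ₂ hφ₂ hΨ' hΨ'_lip hcv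
    obtain ⟨-, hT2⟩ := taylor_aux Ψ Ψ' φ₂ hφ₂ hΨ' hΨ'_lip huc
    have hkey : w (1+i) - (G (i+1) - G i)
        = -(Ψ v - Ψ c - (v - c) * Ψ' v) - (Ψ c - Ψ u - (c - u) * Ψ' u) := by
      rw [hw']
      simp only [hG]
      rw [show (1+i) = (i+1) by ring, ← hv, ← hu, hc, huv]
      ring
    rw [hkey]
    have e1 : |-(Ψ v - Ψ c - (v - c) * Ψ' v) - (Ψ c - Ψ u - (c - u) * Ψ' u)|
        ≤ |Ψ v - Ψ c - (v - c) * Ψ' v| + |Ψ c - Ψ u - (c - u) * Ψ' u| := by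
      rw [sub_eq_add_neg]
      refine (abs_add_le _ _).trans ?_
      rw [abs_neg, abs_neg]
    refine e1.trans ?_
    have hvc : v - c = h - δ := by rw [hc, huv]; ring
    have hcu : c - u = δ := by rw [hc]; ring
    rw [hvc] at hT1
    rw [hcu] at hT2
    calc |Ψ v - Ψ c - (v - c) * Ψ' v| + |Ψ c - Ψ u - (c - u) * Ψ' u|
        ≤ φ₂ * (h - δ)^2 / 2 + φ₂ * δ^2 / 2 := by
          rw [hvc, hcu]; exact add_le_add hT1 hT2
      _ ≤ φ₂ * h^2 / 2 := by nlinarith [mul_nonneg (mul_nonneg hφ₂ hδ0) (sub_nonneg.2 hδh)]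
  have hfinal : |Ψ x - Ψ (b k) - δ * Ψ' (b k)| ≤ φ₂ * h^2 / 2 := by
    obtain ⟨-, hT⟩ := taylor_aux Ψ Ψ' φ₂ hφ₂ hΨ' hΨ'_lip hbk
    have : x - b k = δ := by rw [hδ_def]
    rw [this] at hT
    refine hT.trans ?_
    nlinarith [mul_nonneg (mul_nonneg hφ₂ (sub_nonneg.2 hδh)) (by linarith : (0:ℝ) ≤ h + δ)]
  have hS : |(∑ i ∈ Finset.range k, w (1+i)) - Ψ x| ≤ ((k:ℝ)+1) * (φ₂ * h^2 / 2) := by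
    rw [iden]
    have e1 : |(∑ i ∈ Finset.range k, (w (1+i) - (G (i+1) - G i)))
        - (Ψ x - Ψ (b k) - δ * Ψ' (b k))|
        ≤ |∑ i ∈ Finset.range k, (w (1+i) - (G (i+1) - G i))|
          + |Ψ x - Ψ (b k) - δ * Ψ' (b k)| := by
      rw [sub_eq_add_neg]
      refine (abs_add_le _ _).trans ?_
      rw [abs_neg]
    refine e1.trans ?_
    have e2 : |∑ i ∈ Finset.range k, (w (1+i) - (G (i+1) - G i))|
        ≤ (k:ℝ) * (φ₂ * h^2 / 2) := by
      refine (Finset.abs_sum_le_sum_abs _ _).trans ?_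
      calc ∑ i ∈ Finset.range k, |w (1+i) - (G (i+1) - G i)|
          ≤ ∑ _i ∈ Finset.range k, (φ₂ * h^2 / 2) := Finset.sum_le_sum hterm
        _ = (k:ℝ) * (φ₂ * h^2 / 2) := by
            rw [Finset.sum_const, Finset.card_range, nsmul_eq_mul]
    linarith [hfinal]
  -- put everything together with the rounding errors
  have hround : ∀ t : ℝ, |rnd t - t| ≤ η / 2 := by
    intro t
    rw [abs_sub_comm]
    exact hrnd_close t
  have hsplit : (∑ j ∈ Finset.Icc 1 τ, rnd (w j) * heaviside (x - b j) + rnd wc) - Ψ x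
      = (∑ i ∈ Finset.range k, (rnd (w (1+i)) - w (1+i)))
        + ((∑ i ∈ Finset.range k, w (1+i)) - Ψ x) + rnd wc := by
    rw [hsum, Finset.sum_sub_distrib]
    ring
  rw [hsplit]
  have habs : |(∑ i ∈ Finset.range k, (rnd (w (1+i)) - w (1+i)))
      + ((∑ i ∈ Finset.range k, w (1+i)) - Ψ x) + rnd wc|
      ≤ |∑ i ∈ Finset.range k, (rnd (w (1+i)) - w (1+i))|
        + |(∑ i ∈ Finset.range k, w (1+i)) - Ψ x| + |rnd wc| :=
    abs_add_three _ _ _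
  refine habs.trans ?_
  have hr1 : |∑ i ∈ Finset.range k, (rnd (w (1+i)) - w (1+i))| ≤ (k:ℝ) * (η/2) := by
    refine (Finset.abs_sum_le_sum_abs _ _).trans ?_
    calc ∑ i ∈ Finset.range k, |rnd (w (1+i)) - w (1+i)|
        ≤ ∑ _i ∈ Finset.range k, (η/2) := Finset.sum_le_sum (fun i _ => hround _)
      _ = (k:ℝ) * (η/2) := by rw [Finset.sum_const, Finset.card_range, nsmul_eq_mul]
  have hr2 : |rnd wc| ≤ η/2 := by
    have h1 := hround wc
    nth_rewrite 2 [hwc0] at h1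
    rw [sub_zero] at h1
    exact h1
  have hkτ : (k:ℝ) + 1 ≤ (τ:ℝ) := by exact_mod_cast hk_lt
  have hend : ((k:ℝ)+1) * (φ₂ * h^2 / 2) ≤ 2 * M₁ ^ 2 * R ^ 2 * φ₂ / (τ:ℝ) := by
    have h1 : ((k:ℝ)+1) * (φ₂ * h^2 / 2) ≤ (τ:ℝ) * (φ₂ * h^2 / 2) := by
      apply mul_le_mul_of_nonneg_right hkτ (by positivity)
    refine h1.trans_eq ?_
    rw [hh_def]
    field_simp
  have hk0 : (k:ℝ) * (η/2) ≤ (τ:ℝ) * (η/2) := by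
    apply mul_le_mul_of_nonneg_right (by linarith) (by positivity)
  calc |∑ i ∈ Finset.range k, (rnd (w (1+i)) - w (1+i))|
        + |(∑ i ∈ Finset.range k, w (1+i)) - Ψ x| + |rnd wc|
      ≤ (k:ℝ) * (η/2) + ((k:ℝ)+1) * (φ₂ * h^2 / 2) + η/2 :=
        add_le_add (add_le_add hr1 hS) hr2
    _ ≤ (τ:ℝ) * (η/2) + 2 * M₁ ^ 2 * R ^ 2 * φ₂ / (τ:ℝ) + η/2 :=
        add_le_add (add_le_add hk0 hend) le_rfl
    _ = ((τ:ℝ) + 1) * η / 2 + 2 * M₁ ^ 2 * R ^ 2 * φ₂ / (τ:ℝ) := by ring
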